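/- Fix c > 0 and let ψ(y) = sech²(cy/2) and G(y,0,1) be the Green's function at t = 1, y-variable as first argument. There exist ε₀, C > 0 such that for every φ₀ ∈ L^∞(ℝ) with ‖φ₀‖_∞ ≤ ε₀, there is a unique p₀ ∈ ℝ with |p₀| ≤ C‖φ₀‖_∞ satisfying ∫_ℝ ψ(y)[φ₀(y) − log(1 + p₀ G(y,0,1))] dy = 0. -/

import Mathlib

open MeasureTheory Real Filter

noncomputable def errfn (z : ℝ) : ℝ :=
  (Real.sqrt Real.pi)⁻¹ * ∫ s in Set.Iio z, Real.exp (-s ^ 2)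

noncomputable def psi (c y : ℝ) : ℝ := (1 / Real.cosh (c * y / 2)) ^ 2

noncomputable def Grn (c x y t : ℝ) : ℝ :=
  (Real.sqrt (4 * Real.pi * t))⁻¹ * Real.exp (-(x - y + c * t) ^ 2 / (4 * t)) /
      (1 + Real.exp (c * y))
    + (Real.sqrt (4 * Real.pi * t))⁻¹ * Real.exp (-(x - y - c * t) ^ 2 / (4 * t)) /
      (1 + Real.exp (-(c * y)))
    + c / 4 *
      (errfn ((y - x + c * t) / Real.sqrt (4 * t)) -
        errfn ((y - x - c * t) / Real.sqrt (4 * t))) * psi c y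

noncomputable def eFun (c x t : ℝ) : ℝ :=
  c / 4 *
    (errfn ((x + c * t) / Real.sqrt (4 * t)) - errfn ((x - c * t) / Real.sqrt (4 * t)))

/-! ### Auxiliary lemmas -/

section Aux

lemma gauss_integrable : Integrable (fun s : ℝ => Real.exp (-s ^ 2)) := by
  have := integrable_exp_neg_mul_sq (b := 1) one_pos
  simpa using this

lemma errfn_nonneg (z : ℝ) : 0 ≤ errfn z := by
  apply mul_nonneg (by positivity)
  exact setIntegral_nonneg measurableSet_Iio (fun x _ => (Real.exp_pos _).le)

lemma errfn_mono : Monotone errfn := by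
  intro a b hab
  apply mul_le_mul_of_nonneg_left _ (by positivity)
  apply setIntegral_mono_set gauss_integrable.integrableOn
    (Eventually.of_forall fun x => (Real.exp_pos _).le)
  exact HasSubset.Subset.eventuallyLE (Set.Iio_subset_Iio hab)

lemma errfn_le_one (z : ℝ) : errfn z ≤ 1 := by
  have h1 : (∫ s in Set.Iio z, Real.exp (-s ^ 2)) ≤ ∫ s : ℝ, Real.exp (-s ^ 2) := by
    apply setIntegral_le_integral gauss_integrable
    exact Eventually.of_forall fun x => (Real.exp_pos _).le
  have h2 : (∫ s : ℝ, Real.exp (-s ^ 2)) = Real.sqrt Real.pi := by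
    have := integral_gaussian (1 : ℝ)
    simpa using this
  rw [errfn]
  rw [inv_mul_le_iff₀ (by positivity), mul_one]
  rw [h2] at h1; exact h1

lemma errfn_measurable : Measurable errfn := errfn_mono.measurable

lemma psi_pos (c y : ℝ) : 0 < psi c y := by
  have := Real.cosh_pos (c * y / 2)
  rw [psi]; positivity

lemma psi_le_one (c y : ℝ) : psi c y ≤ 1 := by
  rw [psi]
  have h := Real.one_le_cosh (c * y / 2)
  have : 1 / Real.cosh (c * y / 2) ≤ 1 := by
    rw [div_le_one (by linarith)]; exact h
  calc (1 / Real.cosh (c * y / 2)) ^ 2 ≤ 1 ^ 2 := by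
        apply pow_le_pow_left₀ (by positivity) this
    _ = 1 := one_pow 2

lemma psi_continuous (c : ℝ) : Continuous (fun y => psi c y) := by
  unfold psi
  fun_prop (disch := intro x; exact (Real.cosh_pos _).ne')

lemma psi_even (c y : ℝ) : psi c (-y) = psi c y := by
  unfold psi
  rw [show c * -y / 2 = -(c * y / 2) by ring, Real.cosh_neg]

lemma psi_le_exp (c : ℝ) (hc : 0 < c) (y : ℝ) (hy : 0 ≤ y) :
    psi c y ≤ 4 * Real.exp (-c * y) := by
  have h : Real.exp (c * y / 2) / 2 ≤ Real.cosh (c * y / 2) := by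
    rw [Real.cosh_eq]
    have := (Real.exp_pos (-(c * y / 2))).le
    linarith
  have h2 : 1 / Real.cosh (c * y / 2) ≤ 2 * Real.exp (-(c * y / 2)) := by
    rw [div_le_iff₀ (Real.cosh_pos _)]
    calc (1:ℝ) = 2 * Real.exp (-(c*y/2)) * (Real.exp (c*y/2) / 2) := by
          rw [show 2 * Real.exp (-(c*y/2)) * (Real.exp (c*y/2)/2)
              = Real.exp (-(c*y/2)) * Real.exp (c*y/2) by ring, ← Real.exp_add]
          simp
      _ ≤ 2 * Real.exp (-(c*y/2)) * Real.cosh (c*y/2) := by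
          apply mul_le_mul_of_nonneg_left h (by positivity)
  calc psi c y ≤ (2 * Real.exp (-(c * y / 2))) ^ 2 := by
        apply pow_le_pow_left₀ (by positivity) h2
    _ = 4 * Real.exp (-c * y) := by
        rw [mul_pow, pow_two (Real.exp _), ← Real.exp_add]
        norm_num
        congr 1; ring

lemma psi_integrable (c : ℝ) (hc : 0 < c) : Integrable (fun y => psi c y) := by
  have hmeas : AEStronglyMeasurable (fun y => psi c y) volume :=
    (psi_continuous c).aestronglyMeasurable
  have hIoi : IntegrableOn (fun y => psi c y) (Set.Ioi 0) := by
    apply Integrable.mono' ((exp_neg_integrableOn_Ioi 0 hc).const_mul 4) hmeas.restrict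
    filter_upwards [ae_restrict_mem measurableSet_Ioi] with y hy
    have hcosh := Real.cosh_pos (c * y / 2)
    have hp : (0:ℝ) < psi c y := by rw [psi]; positivity
    rw [Real.norm_eq_abs, abs_of_pos hp]
    exact psi_le_exp c hc y (le_of_lt hy)
  have hIic : IntegrableOn (fun y => psi c y) (Set.Iic 0) := by
    rw [← Measure.map_neg_eq_self (volume : Measure ℝ)]
    have m : MeasurableEmbedding fun x : ℝ => -x :=
      (Homeomorph.neg ℝ).measurableEmbedding
    rw [m.integrableOn_map_iff]
    simp_rw [Function.comp_def, psi_even, Set.neg_preimage, Set.neg_Iic, neg_zero]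
    exact Iff.mpr integrableOn_Ici_iff_integrableOn_Ioi hIoi
  have := hIic.union hIoi
  rw [Set.Iic_union_Ioi] at this
  rwa [← integrableOn_univ]

noncomputable def Mc (c : ℝ) : ℝ := (Real.sqrt (4 * Real.pi))⁻¹ + c / 4

lemma Mc_pos (c : ℝ) (hc : 0 < c) : 0 < Mc c := by
  have : (0:ℝ) < Real.sqrt (4 * Real.pi) := Real.sqrt_pos.mpr (by positivity)
  rw [Mc]; positivity

lemma Grn_pos (c : ℝ) (hc : 0 < c) (x : ℝ) : 0 < Grn c x 0 1 := by
  unfold Grn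
  have h1 : (0:ℝ) < (Real.sqrt (4 * Real.pi * 1))⁻¹ *
      Real.exp (-(x - 0 + c * 1) ^ 2 / (4 * 1)) / (1 + Real.exp (c * 0)) := by
    have : (0:ℝ) < Real.sqrt (4 * Real.pi * 1) := by
      apply Real.sqrt_pos.mpr; positivity
    positivity
  have h2 : (0:ℝ) < (Real.sqrt (4 * Real.pi * 1))⁻¹ *
      Real.exp (-(x - 0 - c * 1) ^ 2 / (4 * 1)) / (1 + Real.exp (-(c * 0))) := by
    have : (0:ℝ) < Real.sqrt (4 * Real.pi * 1) := by
      apply Real.sqrt_pos.mpr; positivity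
    positivity
  have h3 : (0:ℝ) ≤ c / 4 *
      (errfn ((0 - x + c * 1) / Real.sqrt (4 * 1)) -
        errfn ((0 - x - c * 1) / Real.sqrt (4 * 1))) * psi c 0 := by
    apply mul_nonneg (mul_nonneg (by positivity) _) (psi_pos c 0).le
    rw [sub_nonneg]
    apply errfn_mono
    apply div_le_div_of_nonneg_right _ (by positivity)
    linarith
  linarith

lemma Grn_le (c : ℝ) (hc : 0 < c) (x : ℝ) : Grn c x 0 1 ≤ Mc c := by
  rw [Mc]
  unfold Grn
  have hs : Real.sqrt (4 * Real.pi * 1) = Real.sqrt (4 * Real.pi) := by norm_num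
  have hsp : (0:ℝ) < Real.sqrt (4 * Real.pi) := Real.sqrt_pos.mpr (by positivity)
  have he1 : Real.exp (c * 0) = 1 := by norm_num
  have he2 : Real.exp (-(c * 0)) = 1 := by norm_num
  rw [hs, he1, he2]
  have hb1 : (Real.sqrt (4 * Real.pi))⁻¹ * Real.exp (-(x - 0 + c * 1) ^ 2 / (4 * 1)) / (1 + 1)
      ≤ (Real.sqrt (4 * Real.pi))⁻¹ / 2 := by
    rw [div_le_div_iff₀ (by norm_num) (by norm_num)]
    have : Real.exp (-(x - 0 + c * 1) ^ 2 / (4 * 1)) ≤ 1 := by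
      apply Real.exp_le_one_iff.mpr
      have : (0:ℝ) ≤ (x - 0 + c * 1) ^ 2 / (4*1) := by positivity
      linarith
    nlinarith [inv_pos.mpr hsp]
  have hb2 : (Real.sqrt (4 * Real.pi))⁻¹ * Real.exp (-(x - 0 - c * 1) ^ 2 / (4 * 1)) / (1 + 1)
      ≤ (Real.sqrt (4 * Real.pi))⁻¹ / 2 := by
    rw [div_le_div_iff₀ (by norm_num) (by norm_num)]
    have : Real.exp (-(x - 0 - c * 1) ^ 2 / (4 * 1)) ≤ 1 := by
      apply Real.exp_le_one_iff.mpr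
      have : (0:ℝ) ≤ (x - 0 - c * 1) ^ 2 / (4*1) := by positivity
      linarith
    nlinarith [inv_pos.mpr hsp]
  have hb3 : c / 4 * (errfn ((0 - x + c * 1) / Real.sqrt (4 * 1)) -
        errfn ((0 - x - c * 1) / Real.sqrt (4 * 1))) * psi c 0 ≤ c / 4 := by
    have hd : errfn ((0 - x + c * 1) / Real.sqrt (4 * 1)) -
        errfn ((0 - x - c * 1) / Real.sqrt (4 * 1)) ≤ 1 := by
      have := errfn_le_one ((0 - x + c * 1) / Real.sqrt (4 * 1))
      have := errfn_nonneg ((0 - x - c * 1) / Real.sqrt (4 * 1))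
      linarith
    have hd0 : 0 ≤ errfn ((0 - x + c * 1) / Real.sqrt (4 * 1)) -
        errfn ((0 - x - c * 1) / Real.sqrt (4 * 1)) := by
      rw [sub_nonneg]
      apply errfn_mono
      apply div_le_div_of_nonneg_right _ (by positivity)
      linarith
    calc c / 4 * (errfn ((0 - x + c * 1) / Real.sqrt (4 * 1)) -
          errfn ((0 - x - c * 1) / Real.sqrt (4 * 1))) * psi c 0
        ≤ c / 4 * 1 * 1 := by
          apply mul_le_mul (mul_le_mul le_rfl hd hd0 (by positivity)) (psi_le_one c 0)
            (psi_pos c 0).le (by positivity)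
      _ = c / 4 := by ring
  linarith

lemma Grn_measurable (c : ℝ) : Measurable (fun x => Grn c x 0 1) := by
  unfold Grn
  apply Measurable.add
  apply Measurable.add
  · fun_prop
  · fun_prop
  · apply Measurable.mul _ measurable_const
    apply Measurable.mul measurable_const
    apply Measurable.sub
    · exact errfn_measurable.comp (by fun_prop)
    · exact errfn_measurable.comp (by fun_prop)

lemma psiG_integrable (c : ℝ) (hc : 0 < c) :
    Integrable (fun y => psi c y * Grn c y 0 1) := by
  apply Integrable.mono' ((psi_integrable c hc).mul_const (Mc c))
    (((psi_continuous c).measurable.mul (Grn_measurable c)).aestronglyMeasurable)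
  filter_upwards with y
  rw [Real.norm_eq_abs, Pi.mul_apply, abs_of_pos (mul_pos (psi_pos c y) (Grn_pos c hc y))]
  exact mul_le_mul_of_nonneg_left (Grn_le c hc y) (psi_pos c y).le

lemma I_pos (c : ℝ) (hc : 0 < c) : 0 < ∫ y, psi c y * Grn c y 0 1 := by
  rw [integral_pos_iff_support_of_nonneg_ae
    (Eventually.of_forall fun y => (mul_pos (psi_pos c y) (Grn_pos c hc y)).le)
    (psiG_integrable c hc)]
  have : Function.support (fun y => psi c y * Grn c y 0 1) = Set.univ := by
    ext y
    simp only [Function.mem_support, Set.mem_univ, iff_true]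
    exact (mul_pos (psi_pos c y) (Grn_pos c hc y)).ne'
  rw [this]
  simp

lemma J_pos (c : ℝ) (hc : 0 < c) : 0 < ∫ y, psi c y := by
  rw [integral_pos_iff_support_of_nonneg_ae
    (Eventually.of_forall fun y => (psi_pos c y).le) (psi_integrable c hc)]
  have : Function.support (fun y => psi c y) = Set.univ := by
    ext y
    simp only [Function.mem_support, Set.mem_univ, iff_true]
    exact (psi_pos c y).ne'
  rw [this]
  simp

lemma log_one_add_le (t : ℝ) (ht : -1 < t) : Real.log (1 + t) ≤ t := by
  have := Real.log_le_sub_one_of_pos (show (0:ℝ) < 1 + t by linarith)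
  linarith

lemma le_log_one_add (t : ℝ) (h0 : 0 ≤ t) (h1 : t ≤ 1/2) :
    2/3 * t ≤ Real.log (1 + t) := by
  have hpos : (0:ℝ) < 1 + t := by linarith
  have h := Real.log_le_sub_one_of_pos (show (0:ℝ) < (1+t)⁻¹ by positivity)
  rw [Real.log_inv] at h
  have heq : (1+t)⁻¹ - 1 = -(t/(1+t)) := by field_simp; ring
  rw [heq] at h
  have h2 : t/(1+t) ≤ Real.log (1+t) := by linarith
  have h3 : 2/3*t ≤ t/(1+t) := by
    rw [le_div_iff₀ hpos]; nlinarith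
  linarith

lemma abs_log_one_add_le (t : ℝ) (h : |t| ≤ 1/2) : |Real.log (1 + t)| ≤ Real.log 2 := by
  obtain ⟨h1, h2⟩ := abs_le.mp h
  rw [abs_le]
  constructor
  · have hl : Real.log (2⁻¹) ≤ Real.log (1+t) :=
      Real.log_le_log (by norm_num) (by rw [show (2:ℝ)⁻¹ = 1/2 by norm_num]; linarith)
    rw [Real.log_inv] at hl
    linarith
  · exact Real.log_le_log (by linarith) (by linarith)

lemma abs_pG_le (c : ℝ) (hc : 0 < c) (p : ℝ) (hp : |p| ≤ 1/(2 * Mc c)) (y : ℝ) :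
    |p * Grn c y 0 1| ≤ 1/2 := by
  have hM := Mc_pos c hc
  rw [abs_mul, abs_of_pos (Grn_pos c hc y)]
  calc |p| * Grn c y 0 1 ≤ (1/(2 * Mc c)) * Mc c := by
        apply mul_le_mul hp (Grn_le c hc y) (Grn_pos c hc y).le (by positivity)
    _ = 1/2 := by field_simp
  
lemma psiLog_measurable (c p : ℝ) :
    AEStronglyMeasurable (fun y => psi c y * Real.log (1 + p * Grn c y 0 1)) volume := by
  apply Measurable.aestronglyMeasurable
  apply (psi_continuous c).measurable.mul
  exact Real.measurable_log.comp (measurable_const.add (measurable_const.mul (Grn_measurable c)))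

lemma psiLog_integrable (c : ℝ) (hc : 0 < c) (p : ℝ) (hp : |p| ≤ 1/(2 * Mc c)) :
    Integrable (fun y => psi c y * Real.log (1 + p * Grn c y 0 1)) := by
  apply Integrable.mono' ((psi_integrable c hc).mul_const (Real.log 2))
    (psiLog_measurable c p)
  filter_upwards with y
  rw [Real.norm_eq_abs, abs_mul, abs_of_pos (psi_pos c y)]
  exact mul_le_mul_of_nonneg_left (abs_log_one_add_le _ (abs_pG_le c hc p hp y))
    (psi_pos c y).le

end Aux

set_option maxHeartbeats 1000000 in
theorem initial_phase_selection (c : ℝ) (hc : 0 < c) :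
    ∃ ε₀ > 0, ∃ C > 0, ∀ φ₀ : ℝ → ℝ,
      MeasureTheory.MemLp φ₀ ⊤ MeasureTheory.volume →
      MeasureTheory.eLpNorm φ₀ ⊤ MeasureTheory.volume ≤ ENNReal.ofReal ε₀ →
      ∃! p₀ : ℝ,
        |p₀| ≤ C * (MeasureTheory.eLpNorm φ₀ ⊤ MeasureTheory.volume).toReal ∧
        (∫ y : ℝ, psi c y * (φ₀ y - Real.log (1 + p₀ * Grn c y 0 1))) = 0 := by
  have hM := Mc_pos c hc
  obtain ⟨I, hIdef⟩ : ∃ r : ℝ, r = ∫ y, psi c y * Grn c y 0 1 := ⟨_, rfl⟩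
  obtain ⟨J, hJdef⟩ : ∃ r : ℝ, r = ∫ y, psi c y := ⟨_, rfl⟩
  have hI : 0 < I := by rw [hIdef]; exact I_pos c hc
  have hJ : 0 < J := by rw [hJdef]; exact J_pos c hc
  have hIne : I ≠ 0 := ne_of_gt hI
  have hJne : J ≠ 0 := ne_of_gt hJ
  obtain ⟨R₂, hR₂def⟩ : ∃ r : ℝ, r = 1/(2 * Mc c) := ⟨_, rfl⟩
  have hR₂ : 0 < R₂ := by rw [hR₂def]; positivity
  obtain ⟨R, hRdef⟩ : ∃ r : ℝ, r = R₂/2 := ⟨_, rfl⟩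
  have hR : 0 < R := by rw [hRdef]; positivity
  have toM : ∀ x : ℝ, |x| ≤ R₂ → |x| ≤ 1/(2 * Mc c) := by
    intro x hx; rwa [← hR₂def]
  obtain ⟨F, hFdef⟩ : ∃ F : ℝ → ℝ,
      F = fun p => ∫ y, psi c y * Real.log (1 + p * Grn c y 0 1) := ⟨_, rfl⟩
  -- lower bound for nonneg p
  have hFlow : ∀ p, 0 ≤ p → |p| ≤ R₂ → 2/3 * p * I ≤ F p := by
    intro p hp0 hpR
    have h1 : ∀ y, 2/3 * p * (psi c y * Grn c y 0 1)
        ≤ psi c y * Real.log (1 + p * Grn c y 0 1) := by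
      intro y
      have ht0 : 0 ≤ p * Grn c y 0 1 := mul_nonneg hp0 (Grn_pos c hc y).le
      have ht1 : p * Grn c y 0 1 ≤ 1/2 := by
        have := abs_pG_le c hc p (toM p hpR) y
        rw [abs_of_nonneg ht0] at this; exact this
      have := le_log_one_add (p * Grn c y 0 1) ht0 ht1
      have h2 := mul_le_mul_of_nonneg_left this (psi_pos c y).le
      calc 2/3 * p * (psi c y * Grn c y 0 1)
          = psi c y * (2/3 * (p * Grn c y 0 1)) := by ring
        _ ≤ psi c y * Real.log (1 + p * Grn c y 0 1) := h2
    have hint : Integrable (fun y => 2/3 * p * (psi c y * Grn c y 0 1)) :=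
      (psiG_integrable c hc).const_mul _
    have h2 := integral_mono hint (psiLog_integrable c hc p (toM p hpR)) h1
    rw [integral_const_mul] at h2
    simpa only [hFdef, hIdef] using h2
  -- upper bound for nonpos p
  have hFup : ∀ p, p ≤ 0 → |p| ≤ R₂ → F p ≤ p * I := by
    intro p hp0 hpR
    have h1 : ∀ y, psi c y * Real.log (1 + p * Grn c y 0 1)
        ≤ p * (psi c y * Grn c y 0 1) := by
      intro y
      have ht : -1 < p * Grn c y 0 1 := by
        have := abs_pG_le c hc p (toM p hpR) y
        rw [abs_le] at this
        linarith [this.1]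
      have := log_one_add_le (p * Grn c y 0 1) ht
      have h2 := mul_le_mul_of_nonneg_left this (psi_pos c y).le
      calc psi c y * Real.log (1 + p * Grn c y 0 1)
          ≤ psi c y * (p * Grn c y 0 1) := h2
        _ = p * (psi c y * Grn c y 0 1) := by ring
    have hint : Integrable (fun y => p * (psi c y * Grn c y 0 1)) :=
      (psiG_integrable c hc).const_mul _
    have h2 := integral_mono (psiLog_integrable c hc p (toM p hpR)) hint h1
    rw [integral_const_mul] at h2
    simpa only [hFdef, hIdef] using h2
  -- strict monotonicity
  have hFmono : ∀ p q, |p| ≤ R₂ → |q| ≤ R₂ → p < q → F p < F q := by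
    intro p q hp hq hpq
    have hintp := psiLog_integrable c hc p (toM p hp)
    have hintq := psiLog_integrable c hc q (toM q hq)
    have key : 0 < (∫ y, (psi c y * Real.log (1 + q * Grn c y 0 1)
        - psi c y * Real.log (1 + p * Grn c y 0 1))) := by
      rw [integral_pos_iff_support_of_nonneg_ae
        (f := fun y => psi c y * Real.log (1 + q * Grn c y 0 1)
          - psi c y * Real.log (1 + p * Grn c y 0 1)) _ (hintq.sub hintp)]
      · have hsupp : Function.support (fun y => psi c y * Real.log (1 + q * Grn c y 0 1)
            - psi c y * Real.log (1 + p * Grn c y 0 1)) = Set.univ := by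
          ext y
          simp only [Function.mem_support, Set.mem_univ, iff_true]
          have hGy := Grn_pos c hc y
          have hp2 := abs_pG_le c hc p (toM p hp) y
          have hq2 := abs_pG_le c hc q (toM q hq) y
          rw [abs_le] at hp2 hq2
          have hlog : Real.log (1 + p * Grn c y 0 1) < Real.log (1 + q * Grn c y 0 1) := by
            apply Real.log_lt_log (by linarith [hp2.1])
            have := mul_lt_mul_of_pos_right hpq hGy
            linarith
          have := mul_lt_mul_of_pos_left hlog (psi_pos c y)
          intro hcon
          rw [sub_eq_zero] at hcon
          rw [hcon] at this
          exact lt_irrefl _ this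
        rw [hsupp]; simp
      · filter_upwards with y
        have hGy := Grn_pos c hc y
        have hp2 := abs_pG_le c hc p (toM p hp) y
        rw [abs_le] at hp2
        have hlog : Real.log (1 + p * Grn c y 0 1) ≤ Real.log (1 + q * Grn c y 0 1) := by
          apply Real.log_le_log (by linarith [hp2.1])
          nlinarith
        have := mul_le_mul_of_nonneg_left hlog (psi_pos c y).le
        simp only [Pi.zero_apply]
        linarith
    rw [integral_sub hintq hintp] at key
    have : (∫ y, psi c y * Real.log (1 + q * Grn c y 0 1))
        - ∫ y, psi c y * Real.log (1 + p * Grn c y 0 1) = F q - F p := by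
      simp only [hFdef]
    rw [this] at key
    linarith
  -- continuity on [-R, R]
  have hFcont : ContinuousOn F (Set.Icc (-R) R) := by
    rw [hFdef]
    intro p hp
    apply ContinuousAt.continuousWithinAt
    apply continuousAt_of_dominated (bound := fun y => psi c y * Real.log 2)
    · filter_upwards with q
      exact psiLog_measurable c q
    · have hev : ∀ᶠ q in nhds p, |q| < R₂ := by
        have : |p| < R₂ := by
          rw [Set.mem_Icc] at hp
          rw [abs_lt]
          constructor <;> [linarith [hp.1]; linarith [hp.2]]
        exact (continuous_abs.continuousAt).eventually_lt continuousAt_const this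
      filter_upwards [hev] with q hqR
      filter_upwards with y
      rw [Real.norm_eq_abs, abs_mul, abs_of_pos (psi_pos c y)]
      exact mul_le_mul_of_nonneg_left
        (abs_log_one_add_le _ (abs_pG_le c hc q (toM q hqR.le) y)) (psi_pos c y).le
    · exact (psi_integrable c hc).mul_const _
    · filter_upwards with y
      apply ContinuousAt.mul continuousAt_const
      apply ContinuousAt.log
      · exact continuousAt_const.add (continuousAt_id.mul continuousAt_const)
      · rw [Set.mem_Icc] at hp
        have hp2 := abs_pG_le c hc p (by
          rw [abs_le]; constructor <;> [linarith [hp.1]; linarith [hp.2]]) y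
        rw [abs_le] at hp2
        intro hzero
        have : p * Grn c y 0 1 = -1 := by linarith
        linarith [hp2.1]
  -- constants
  refine ⟨R * I / (3 * J), div_pos (mul_pos hR hI) (by linarith),
    3 * J / (2 * I), div_pos (by linarith) (by linarith), ?_⟩
  intro φ₀ hmem hsmall
  obtain ⟨ε, hεdef⟩ : ∃ r : ℝ, r = (eLpNorm φ₀ ⊤ volume).toReal := ⟨_, rfl⟩
  rw [← hεdef]
  have hε0 : 0 ≤ ε := by rw [hεdef]; exact ENNReal.toReal_nonneg
  have hεle : ε ≤ R * I / (3 * J) := by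
    rw [hεdef]
    exact ENNReal.toReal_le_of_le_ofReal
      (le_of_lt (div_pos (mul_pos hR hI) (by linarith))) hsmall
  -- a.e. bound on φ₀
  have hφbound : ∀ᵐ y ∂(volume : Measure ℝ), |φ₀ y| ≤ ε := by
    have h1 := MeasureTheory.ae_le_eLpNormEssSup (f := φ₀) (μ := volume)
    filter_upwards [h1] with y hy
    have h2 : (‖φ₀ y‖₊ : ENNReal) ≤ eLpNorm φ₀ ⊤ volume := by
      rwa [eLpNorm_exponent_top]
    have h3 := ENNReal.toReal_mono (hmem.2.ne) h2
    rw [hεdef]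
    rwa [ENNReal.coe_toReal, coe_nnnorm, Real.norm_eq_abs] at h3
  -- integrability of psi * φ₀
  have hφmeas : AEStronglyMeasurable (fun y => psi c y * φ₀ y) volume :=
    ((psi_continuous c).aestronglyMeasurable.mul hmem.1)
  have hφint : Integrable (fun y => psi c y * φ₀ y) := by
    apply Integrable.mono' ((psi_integrable c hc).mul_const ε) hφmeas
    filter_upwards [hφbound] with y hy
    rw [Real.norm_eq_abs, abs_mul, abs_of_pos (psi_pos c y)]
    exact mul_le_mul_of_nonneg_left hy (psi_pos c y).le
  obtain ⟨a, hadef⟩ : ∃ r : ℝ, r = ∫ y, psi c y * φ₀ y := ⟨_, rfl⟩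
  have haabs : |a| ≤ J * ε := by
    have h1 : ‖∫ y, psi c y * φ₀ y‖ ≤ ∫ y, psi c y * ε := by
      apply norm_integral_le_of_norm_le ((psi_integrable c hc).mul_const ε)
      filter_upwards [hφbound] with y hy
      rw [Real.norm_eq_abs, abs_mul, abs_of_pos (psi_pos c y)]
      exact mul_le_mul_of_nonneg_left hy (psi_pos c y).le
    rw [integral_mul_const] at h1
    rw [hadef, hJdef, ← Real.norm_eq_abs]
    exact h1
  have hJε : J * ε ≤ R * I / 3 := by
    have := mul_le_mul_of_nonneg_left hεle hJ.le
    calc J * ε ≤ J * (R * I / (3 * J)) := this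
      _ = R * I / 3 := by
          rw [show J * (R * I / (3 * J)) = (J / J) * (R * I / 3) by ring,
            div_self hJne, one_mul]
  -- the equation is equivalent to F p = a
  have heqiv : ∀ p, |p| ≤ R₂ →
      ((∫ y : ℝ, psi c y * (φ₀ y - Real.log (1 + p * Grn c y 0 1))) = 0 ↔ F p = a) := by
    intro p hpR
    have hsub : (∫ y : ℝ, psi c y * (φ₀ y - Real.log (1 + p * Grn c y 0 1)))
        = a - F p := by
      simp only [hadef, hFdef]
      rw [← integral_sub hφint (psiLog_integrable c hc p (toM p hpR))]
      congr 1; ext y; ring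
    rw [hsub]
    constructor
    · intro h; linarith
    · intro h; linarith
  -- existence via IVT
  have hFR : R * I / 3 ≤ F R := by
    have := hFlow R hR.le (by rw [abs_of_pos hR]; linarith)
    have h2 : R * I / 3 ≤ 2/3 * R * I := by nlinarith
    linarith
  have hFmR : F (-R) ≤ -(R * I / 3) := by
    have := hFup (-R) (by linarith) (by rw [abs_neg, abs_of_pos hR]; linarith)
    have h2 : (-R) * I ≤ -(R * I / 3) := by nlinarith
    linarith
  have hmem' : a ∈ Set.Icc (F (-R)) (F R) := by
    rw [abs_le] at haabs
    constructor
    · linarith [haabs.1]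
    · linarith [haabs.2]
  obtain ⟨p, hpmem, hFp⟩ := intermediate_value_Icc (by linarith : -R ≤ R) hFcont hmem'
  rw [Set.mem_Icc] at hpmem
  have hpR₂ : |p| ≤ R₂ := by
    rw [abs_le]
    constructor <;> [linarith [hpmem.1]; linarith [hpmem.2]]
  -- bound on |p|
  have hpbound : |p| ≤ 3 * J / (2 * I) * ε := by
    rcases le_or_gt 0 p with hp0 | hp0
    · rw [abs_of_nonneg hp0]
      have h1 := hFlow p hp0 hpR₂
      have h2 : 2/3 * p * I ≤ a := by rw [← hFp]; exact h1
      have h3 : a ≤ J * ε := (abs_le.mp haabs).2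
      have : 2/3 * p * I ≤ J * ε := le_trans h2 h3
      rw [div_mul_eq_mul_div, le_div_iff₀ (by linarith)]
      nlinarith
    · rw [abs_of_neg hp0]
      have h1 := hFup p hp0.le hpR₂
      have h2 : a ≤ p * I := by rw [← hFp]; exact h1
      have h3 : -(J * ε) ≤ a := (abs_le.mp haabs).1
      have : -(J * ε) ≤ p * I := le_trans h3 h2
      rw [div_mul_eq_mul_div, le_div_iff₀ (by linarith)]
      nlinarith
  refine ⟨p, ⟨hpbound, (heqiv p hpR₂).mpr hFp⟩, ?_⟩
  -- uniqueness
  intro q ⟨hqbound, hqeq⟩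
  have hCε : 3 * J / (2 * I) * ε ≤ R₂ := by
    have h1 : 3 * J / (2 * I) * ε ≤ 3 * J / (2 * I) * (R * I / (3 * J)) := by
      apply mul_le_mul_of_nonneg_left hεle
        (le_of_lt (div_pos (by linarith) (by linarith)))
    have h2 : 3 * J / (2 * I) * (R * I / (3 * J)) = R / 2 := by
      rw [show 3 * J / (2 * I) * (R * I / (3 * J)) = (J / J) * (I / I) * (R / 2) by ring,
        div_self hJne, div_self hIne]
      ring
    rw [h2] at h1
    linarith
  have hqR₂ : |q| ≤ R₂ := le_trans hqbound hCε
  have hFq : F q = a := (heqiv q hqR₂).mp hqeq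
  by_contra hne
  rcases lt_trichotomy q p with h | h | h
  · have := hFmono q p hqR₂ hpR₂ h
    rw [hFq, hFp] at this
    exact lt_irrefl _ this
  · exact hne h
  · have := hFmono p q hpR₂ hqR₂ h
    rw [hFq, hFp] at this
    exact lt_irrefl _ this
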